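/- arXiv:1012.5880 — 6 statements merged into one kernel-verified Lean document; each statement's English description precedes it below -/
import Mathlib

section
/- Let f : I ⊆ ℝ → ℝ be a P-function (f ∈ P(I)), let a, b ∈ I with a < b, and suppose f is Lebesgue integrable on [a,b]. Then f((a+b)/2) ≤ (2/(b-a)) ∫_a^b f(x) dx ≤ 2[f(a) + f(b)]. -/
open MeasureTheory intervalIntegral

/-- Hadamard-type inequality for P-functions:
if `f ∈ P(I)` (nonnegative and `f(λx+(1-λ)y) ≤ f(x) + f(y)` for `λ ∈ [0,1]`),
`a, b ∈ I`, `a < b`, and `f` is Lebesgue integrable on `[a,b]`, then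
`f((a+b)/2) ≤ (2/(b-a)) ∫_a^b f ≤ 2 (f(a)+f(b))`. -/
theorem p_function_hadamard
    (I : Set ℝ) (hI : Convex ℝ I) (f : ℝ → ℝ)
    (hf0 : ∀ x ∈ I, 0 ≤ f x)
    (hfP : ∀ x ∈ I, ∀ y ∈ I, ∀ l ∈ Set.Icc (0:ℝ) 1,
      f (l * x + (1 - l) * y) ≤ f x + f y)
    (a b : ℝ) (ha : a ∈ I) (hb : b ∈ I) (hab : a < b)
    (hint : IntervalIntegrable f volume a b) :
    f ((a + b) / 2) ≤ (2 / (b - a)) * ∫ x in a..b, f x ∧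
    (2 / (b - a)) * ∫ x in a..b, f x ≤ 2 * (f a + f b) := by
  have hba : (0:ℝ) < b - a := by linarith
  have hsub : Set.Icc a b ⊆ I := hI.ordConnected.out ha hb
  -- reflected integrability
  have hintr : IntervalIntegrable (fun x => f (a + b - x)) volume a b := by
    have := hint.comp_sub_left (a + b)
    simpa using this.symm
  -- reflected integral equals original
  have hrefl : (∫ x in a..b, f (a + b - x)) = ∫ x in a..b, f x := by
    have := intervalIntegral.integral_comp_sub_left f (a + b) (a := a) (b := b)
    simpa using this
  -- pointwise upper bound
  have hub : ∀ x ∈ Set.Icc a b, f x ≤ f a + f b := by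
    intro x hx
    have hl : (b - x) / (b - a) ∈ Set.Icc (0:ℝ) 1 := by
      constructor
      · exact div_nonneg (by linarith [hx.2]) hba.le
      · rw [div_le_one hba]; linarith [hx.1]
    have := hfP a ha b hb _ hl
    have hx' : (b - x) / (b - a) * a + (1 - (b - x) / (b - a)) * b = x := by
      field_simp
      ring
    rwa [hx'] at this
  -- pointwise lower bound
  have hlb : ∀ x ∈ Set.Icc a b, f ((a + b) / 2) ≤ f x + f (a + b - x) := by
    intro x hx
    have hx2 : a + b - x ∈ Set.Icc a b := ⟨by linarith [hx.2], by linarith [hx.1]⟩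
    have := hfP x (hsub hx) (a + b - x) (hsub hx2) (1/2) ⟨by norm_num, by norm_num⟩
    have heq : (1/2 : ℝ) * x + (1 - 1/2) * (a + b - x) = (a + b) / 2 := by ring
    rwa [heq] at this
  -- integrate upper bound
  have hIub : (∫ x in a..b, f x) ≤ (b - a) * (f a + f b) := by
    have := intervalIntegral.integral_mono_on hab.le hint
      (intervalIntegrable_const) hub
    simpa [mul_add] using this
  -- integrate lower bound
  have hIlb : (b - a) * f ((a + b) / 2) ≤ 2 * ∫ x in a..b, f x := by
    have h1 : (∫ _ in a..b, f ((a + b) / 2)) ≤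
        ∫ x in a..b, (f x + f (a + b - x)) := by
      exact intervalIntegral.integral_mono_on hab.le intervalIntegrable_const
        (hint.add hintr) hlb
    rw [intervalIntegral.integral_const, intervalIntegral.integral_add hint hintr,
      hrefl] at h1
    simpa [smul_eq_mul, two_mul] using h1
  constructor
  · rw [div_mul_eq_mul_div, le_div_iff₀ hba]
    linarith
  · rw [div_mul_eq_mul_div, div_le_iff₀ hba]
    linarith
end

section
/- Suppose f : Δ = [a,b] × [c,d] → ℝ (with a < b, c < d) is convex on the co-ordinates on Δ and all the integrals involved exist. Then f((a+b)/2, (c+d)/2) ≤ (1/2)[(1/(b-a)) ∫_a^b f(x, (c+d)/2) dx + (1/(d-c)) ∫_c^d f((a+b)/2, y) dy] ≤ (1/((b-a)(d-c))) ∫_a^b ∫_c^d f(x,y) dx dy ≤ (1/4)[(1/(b-a)) ∫_a^b f(x,c) dx + (1/(b-a)) ∫_a^b f(x,d) dx + (1/(d-c)) ∫_c^d f(a,y) dy + (1/(d-c)) ∫_c^d f(b,y) dy] ≤ (f(a,c) + f(a,d) + f(b,c) + f(b,d))/4. -/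
open MeasureTheory intervalIntegral

lemma hh_left {a b : ℝ} (hab : a < b) {g : ℝ → ℝ}
    (hg : ConvexOn ℝ (Set.Icc a b) g) (hi : IntervalIntegrable g volume a b) :
    g ((a + b) / 2) ≤ (1 / (b - a)) * ∫ x in a..b, g x := by
  have hi' : IntervalIntegrable (fun x => g (a + b - x)) volume a b := by
    simpa using (hi.comp_sub_left (a + b)).symm
  have key : ∀ x ∈ Set.Icc a b, g ((a + b) / 2) ≤ (g x + g (a + b - x)) / 2 := by
    intro x hx
    have hx' : a + b - x ∈ Set.Icc a b := by
      constructor <;> [linarith [hx.2]; linarith [hx.1]]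
    have := hg.2 hx hx' (by norm_num : (0:ℝ) ≤ 1/2) (by norm_num : (0:ℝ) ≤ 1/2)
      (by norm_num)
    have heq : (1/2 : ℝ) • x + (1/2 : ℝ) • (a + b - x) = (a + b) / 2 := by
      simp [smul_eq_mul]; ring
    rw [heq] at this
    simp only [smul_eq_mul] at this
    linarith
  have hmono := intervalIntegral.integral_mono_on hab.le
    (_root_.intervalIntegrable_const (c := g ((a + b) / 2)))
    ((hi.add hi').div_const 2) key
  rw [intervalIntegral.integral_const] at hmono
  have hrefl : (∫ x in a..b, g (a + b - x)) = ∫ x in a..b, g x := by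
    simpa using intervalIntegral.integral_comp_sub_left (a := a) (b := b) g (a + b)
  have hsum : (∫ x in a..b, (g x + g (a + b - x)) / 2) = ∫ x in a..b, g x := by
    rw [intervalIntegral.integral_div, intervalIntegral.integral_add hi hi', hrefl]
    ring
  rw [hsum] at hmono
  have hba : (0:ℝ) < b - a := by linarith
  rw [smul_eq_mul] at hmono
  have h2 : g ((a+b)/2) ≤ (∫ x in a..b, g x) / (b - a) := by
    rw [le_div_iff₀ hba]; linarith
  calc g ((a+b)/2) ≤ (∫ x in a..b, g x) / (b - a) := h2
    _ = (1 / (b - a)) * ∫ x in a..b, g x := by ring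

lemma hh_right {a b : ℝ} (hab : a < b) {g : ℝ → ℝ}
    (hg : ConvexOn ℝ (Set.Icc a b) g) (hi : IntervalIntegrable g volume a b) :
    (1 / (b - a)) * ∫ x in a..b, g x ≤ (g a + g b) / 2 := by
  have hba : (0:ℝ) < b - a := by linarith
  have key : ∀ x ∈ Set.Icc a b, g x ≤ (g a * (b - x) + g b * (x - a)) / (b - a) := by
    intro x hx
    have h1 : (0:ℝ) ≤ (b - x) / (b - a) := by
      apply div_nonneg <;> linarith [hx.2]
    have h2 : (0:ℝ) ≤ (x - a) / (b - a) := by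
      apply div_nonneg <;> linarith [hx.1]
    have h3 : (b - x) / (b - a) + (x - a) / (b - a) = 1 := by
      field_simp
      ring
    have := hg.2 (Set.left_mem_Icc.mpr hab.le) (Set.right_mem_Icc.mpr hab.le) h1 h2 h3
    have heq : ((b - x) / (b - a)) • a + ((x - a) / (b - a)) • b = x := by
      simp only [smul_eq_mul]; field_simp
      try ring
    rw [heq] at this
    simp only [smul_eq_mul] at this
    calc g x ≤ (b - x) / (b - a) * g a + (x - a) / (b - a) * g b := this
      _ = (g a * (b - x) + g b * (x - a)) / (b - a) := by ring
  have hcont : IntervalIntegrable (fun x => (g a * (b - x) + g b * (x - a)) / (b - a))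
      volume a b := by
    apply Continuous.intervalIntegrable; fun_prop
  have hmono := intervalIntegral.integral_mono_on hab.le hi hcont key
  have hval : (∫ x in a..b, (g a * (b - x) + g b * (x - a)) / (b - a))
      = (g a + g b) / 2 * (b - a) := by
    have : (fun x => (g a * (b - x) + g b * (x - a)) / (b - a))
        = fun x => ((g b - g a) / (b - a)) * x + ((g a * b - g b * a) / (b - a)) := by
      funext x; field_simp
      try ring
    rw [this]
    rw [intervalIntegral.integral_add (intervalIntegrable_id.const_mul _)
      (intervalIntegrable_const), intervalIntegral.integral_const_mul,
      integral_id, intervalIntegral.integral_const]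
    have hne : b - a ≠ 0 := hba.ne'
    field_simp
    linear_combination (2 * (b - a) * (g a * b - g b * a)) * mul_inv_cancel₀ hne
  rw [hval] at hmono
  rw [mul_comm, ← div_eq_mul_one_div, div_le_iff₀ hba]
  linarith [hmono]

lemma aux_mul {p t D q : ℝ} (hp : 0 < p) (h : t ≤ q * D) : (1/p) * t ≤ (1/p) * (q * D) :=
  mul_le_mul_of_nonneg_left h (by positivity)

lemma ii_eq {a b : ℝ} (h : a ≤ b) (g : ℝ → ℝ) :
    ∫ x in a..b, g x = ∫ x, g x ∂(volume.restrict (Set.Icc a b)) := by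
  rw [intervalIntegral.integral_of_le h, ← MeasureTheory.integral_Icc_eq_integral_Ioc]


/-- Dragomir's Hadamard-type inequalities for functions convex on the
co-ordinates on the rectangle `Δ = [a,b] × [c,d]` (all integrals involved
are assumed to exist). -/
theorem coordinated_convex_hadamard
    (a b c d : ℝ) (hab : a < b) (hcd : c < d) (f : ℝ × ℝ → ℝ)
    (hfx : ∀ x ∈ Set.Icc a b, ConvexOn ℝ (Set.Icc c d) (fun v => f (x, v)))
    (hfy : ∀ y ∈ Set.Icc c d, ConvexOn ℝ (Set.Icc a b) (fun u => f (u, y)))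
    (hix : ∀ x ∈ Set.Icc a b, IntervalIntegrable (fun v => f (x, v)) volume c d)
    (hiy : ∀ y ∈ Set.Icc c d, IntervalIntegrable (fun u => f (u, y)) volume a b)
    (hiF : IntegrableOn f (Set.Icc a b ×ˢ Set.Icc c d) volume)
    (hiI : IntervalIntegrable (fun x => ∫ y in c..d, f (x, y)) volume a b) :
    f ((a + b) / 2, (c + d) / 2) ≤
      (1 / 2) * ((1 / (b - a)) * (∫ x in a..b, f (x, (c + d) / 2)) +
        (1 / (d - c)) * ∫ y in c..d, f ((a + b) / 2, y)) ∧
    (1 / 2) * ((1 / (b - a)) * (∫ x in a..b, f (x, (c + d) / 2)) +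
        (1 / (d - c)) * ∫ y in c..d, f ((a + b) / 2, y)) ≤
      (1 / ((b - a) * (d - c))) * ∫ x in a..b, ∫ y in c..d, f (x, y) ∧
    (1 / ((b - a) * (d - c))) * (∫ x in a..b, ∫ y in c..d, f (x, y)) ≤
      (1 / 4) * ((1 / (b - a)) * (∫ x in a..b, f (x, c)) +
        (1 / (b - a)) * (∫ x in a..b, f (x, d)) +
        (1 / (d - c)) * (∫ y in c..d, f (a, y)) +
        (1 / (d - c)) * ∫ y in c..d, f (b, y)) ∧
    (1 / 4) * ((1 / (b - a)) * (∫ x in a..b, f (x, c)) +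
        (1 / (b - a)) * (∫ x in a..b, f (x, d)) +
        (1 / (d - c)) * (∫ y in c..d, f (a, y)) +
        (1 / (d - c)) * ∫ y in c..d, f (b, y)) ≤
      (f (a, c) + f (a, d) + f (b, c) + f (b, d)) / 4 := by
  have hba : (0:ℝ) < b - a := by linarith
  have hdc : (0:ℝ) < d - c := by linarith
  have hma : (a + b) / 2 ∈ Set.Icc a b := ⟨by linarith, by linarith⟩
  have hmc : (c + d) / 2 ∈ Set.Icc c d := ⟨by linarith, by linarith⟩
  have haa : a ∈ Set.Icc a b := Set.left_mem_Icc.mpr hab.le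
  have hbb : b ∈ Set.Icc a b := Set.right_mem_Icc.mpr hab.le
  have hcc : c ∈ Set.Icc c d := Set.left_mem_Icc.mpr hcd.le
  have hdd : d ∈ Set.Icc c d := Set.right_mem_Icc.mpr hcd.le
  -- Fubini setup
  have hμν : (volume.restrict (Set.Icc a b)).prod (volume.restrict (Set.Icc c d)) =
      (volume : Measure (ℝ × ℝ)).restrict (Set.Icc a b ×ˢ Set.Icc c d) := by
    rw [Measure.prod_restrict, ← Measure.volume_eq_prod]
  have hfprod : Integrable f
      ((volume.restrict (Set.Icc a b)).prod (volume.restrict (Set.Icc c d))) := by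
    rw [hμν]; exact hiF
  have hmarg : Integrable (fun y => ∫ x, f (x, y) ∂(volume.restrict (Set.Icc a b)))
      (volume.restrict (Set.Icc c d)) := hfprod.integral_prod_right
  have hswap : ∫ x, ∫ y, f (x, y) ∂(volume.restrict (Set.Icc c d))
        ∂(volume.restrict (Set.Icc a b))
      = ∫ y, ∫ x, f (x, y) ∂(volume.restrict (Set.Icc a b))
        ∂(volume.restrict (Set.Icc c d)) := by
    apply MeasureTheory.integral_integral_swap
    have : Function.uncurry (fun x y => f (x, y)) = f := by funext p; rfl
    rw [this]; exact hfprod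
  have hDswap : (∫ y in c..d, ∫ x in a..b, f (x, y)) = ∫ x in a..b, ∫ y in c..d, f (x, y) := by
    simp only [ii_eq hab.le, ii_eq hcd.le]
    exact hswap.symm
  have hmargI : IntervalIntegrable (fun y => ∫ x in a..b, f (x, y)) volume c d := by
    have heq : (fun y => ∫ x in a..b, f (x, y))
        = fun y => ∫ x, f (x, y) ∂(volume.restrict (Set.Icc a b)) :=
      funext fun y => ii_eq hab.le _
    rw [heq]
    constructor
    · exact MeasureTheory.IntegrableOn.mono_set hmarg Set.Ioc_subset_Icc_self
    · rw [Set.Ioc_eq_empty (by linarith : ¬ d < c)]; exact integrableOn_empty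
  -- First inequality
  have F1 : f ((a + b) / 2, (c + d) / 2) ≤
      (1 / (b - a)) * ∫ x in a..b, f (x, (c + d) / 2) :=
    hh_left hab (hfy _ hmc) (hiy _ hmc)
  have F2 : f ((a + b) / 2, (c + d) / 2) ≤
      (1 / (d - c)) * ∫ y in c..d, f ((a + b) / 2, y) :=
    hh_left hcd (hfx _ hma) (hix _ hma)
  refine ⟨by linarith, ?_, ?_, ?_⟩
  · -- Second inequality
    have G1 : (∫ x in a..b, f (x, (c + d) / 2)) ≤
        (1 / (d - c)) * ∫ x in a..b, ∫ y in c..d, f (x, y) := by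
      have := intervalIntegral.integral_mono_on hab.le (hiy _ hmc)
        (hiI.const_mul (1 / (d - c)))
        (fun x hx => hh_left hcd (hfx x hx) (hix x hx))
      rwa [intervalIntegral.integral_const_mul] at this
    have G2 : (∫ y in c..d, f ((a + b) / 2, y)) ≤
        (1 / (b - a)) * ∫ x in a..b, ∫ y in c..d, f (x, y) := by
      have := intervalIntegral.integral_mono_on hcd.le (hix _ hma)
        (hmargI.const_mul (1 / (b - a)))
        (fun y hy => hh_left hab (hfy y hy) (hiy y hy))
      rwa [intervalIntegral.integral_const_mul, hDswap] at this
    have G1' := aux_mul hba G1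
    have G2' := aux_mul hdc G2
    have e1 : (1/(b-a)) * ((1/(d-c)) * ∫ x in a..b, ∫ y in c..d, f (x, y))
        = (1 / ((b - a) * (d - c))) * ∫ x in a..b, ∫ y in c..d, f (x, y) := by
      rw [← mul_assoc, one_div_mul_one_div]
    have e2 : (1/(d-c)) * ((1/(b-a)) * ∫ x in a..b, ∫ y in c..d, f (x, y))
        = (1 / ((b - a) * (d - c))) * ∫ x in a..b, ∫ y in c..d, f (x, y) := by
      rw [← mul_assoc, one_div_mul_one_div, mul_comm (d-c)]
    rw [e1] at G1'; rw [e2] at G2'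
    linarith
  · -- Third inequality
    have H1 : (∫ x in a..b, ∫ y in c..d, f (x, y)) ≤
        ((d - c) / 2) * ((∫ x in a..b, f (x, c)) + ∫ x in a..b, f (x, d)) := by
      have hpt : ∀ x ∈ Set.Icc a b, (∫ y in c..d, f (x, y)) ≤
          ((d - c) / 2) * (f (x, c) + f (x, d)) := by
        intro x hx
        have h := hh_right hcd (hfx x hx) (hix x hx)
        have h1 : (d - c) * ((1/(d-c)) * ∫ y in c..d, f (x, y)) = ∫ y in c..d, f (x, y) := by
          field_simp
        nlinarith [mul_le_mul_of_nonneg_left h hdc.le]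
      have := intervalIntegral.integral_mono_on hab.le hiI
        (((hiy c hcc).add (hiy d hdd)).const_mul ((d - c) / 2)) hpt
      rwa [intervalIntegral.integral_const_mul,
        intervalIntegral.integral_add (hiy c hcc) (hiy d hdd)] at this
    have H2 : (∫ x in a..b, ∫ y in c..d, f (x, y)) ≤
        ((b - a) / 2) * ((∫ y in c..d, f (a, y)) + ∫ y in c..d, f (b, y)) := by
      have hpt : ∀ y ∈ Set.Icc c d, (∫ x in a..b, f (x, y)) ≤
          ((b - a) / 2) * (f (a, y) + f (b, y)) := by
        intro y hy
        have h := hh_right hab (hfy y hy) (hiy y hy)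
        have h1 : (b - a) * ((1/(b-a)) * ∫ x in a..b, f (x, y)) = ∫ x in a..b, f (x, y) := by
          field_simp
        nlinarith [mul_le_mul_of_nonneg_left h hba.le]
      have := intervalIntegral.integral_mono_on hcd.le hmargI
        (((hix a haa).add (hix b hbb)).const_mul ((b - a) / 2)) hpt
      rwa [intervalIntegral.integral_const_mul,
        intervalIntegral.integral_add (hix a haa) (hix b hbb), hDswap] at this
    have hpos : (0:ℝ) < (b - a) * (d - c) := by positivity
    have K1 := mul_le_mul_of_nonneg_left H1
      (by positivity : (0:ℝ) ≤ 1 / ((b - a) * (d - c)))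
    have K2 := mul_le_mul_of_nonneg_left H2
      (by positivity : (0:ℝ) ≤ 1 / ((b - a) * (d - c)))
    have e1 : (1 / ((b - a) * (d - c))) * (((d - c) / 2) *
          ((∫ x in a..b, f (x, c)) + ∫ x in a..b, f (x, d)))
        = (1 / (2 * (b - a))) * ((∫ x in a..b, f (x, c)) + ∫ x in a..b, f (x, d)) := by
      field_simp
      try ring
    have e2 : (1 / ((b - a) * (d - c))) * (((b - a) / 2) *
          ((∫ y in c..d, f (a, y)) + ∫ y in c..d, f (b, y)))
        = (1 / (2 * (d - c))) * ((∫ y in c..d, f (a, y)) + ∫ y in c..d, f (b, y)) := by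
      field_simp
      try ring
    rw [e1] at K1; rw [e2] at K2
    have e3 : (1 / (2 * (b - a))) * ((∫ x in a..b, f (x, c)) + ∫ x in a..b, f (x, d))
        = (1/2) * ((1 / (b - a)) * (∫ x in a..b, f (x, c))
            + (1 / (b - a)) * ∫ x in a..b, f (x, d)) := by
      field_simp
      try ring
    have e4 : (1 / (2 * (d - c))) * ((∫ y in c..d, f (a, y)) + ∫ y in c..d, f (b, y))
        = (1/2) * ((1 / (d - c)) * (∫ y in c..d, f (a, y))
            + (1 / (d - c)) * ∫ y in c..d, f (b, y)) := by
      field_simp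
      try ring
    rw [e3] at K1; rw [e4] at K2
    linarith
  · -- Fourth inequality
    have R1 : (1 / (b - a)) * (∫ x in a..b, f (x, c)) ≤ (f (a, c) + f (b, c)) / 2 :=
      hh_right hab (hfy c hcc) (hiy c hcc)
    have R2 : (1 / (b - a)) * (∫ x in a..b, f (x, d)) ≤ (f (a, d) + f (b, d)) / 2 :=
      hh_right hab (hfy d hdd) (hiy d hdd)
    have R3 : (1 / (d - c)) * (∫ y in c..d, f (a, y)) ≤ (f (a, c) + f (a, d)) / 2 :=
      hh_right hcd (hfx a haa) (hix a haa)
    have R4 : (1 / (d - c)) * (∫ y in c..d, f (b, y)) ≤ (f (b, c) + f (b, d)) / 2 :=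
      hh_right hcd (hfx b hbb) (hix b hbb)
    linarith
end

section
/- Let f : Δ = [a,b] × [c,d] → ℝ (a < b, c < d) be a Godunova–Levin function on Δ, i.e., f is nonnegative and f(λx + (1-λ)z, λy + (1-λ)w) ≤ f(x,y)/λ + f(z,w)/(1-λ) for all (x,y), (z,w) ∈ Δ and λ ∈ (0,1). Then f is a co-ordinated Godunova–Levin function on Δ: for every x ∈ [a,b] the partial mapping f_x : [c,d] → ℝ, f_x(v) = f(x,v), is a Godunova–Levin function, and for every y ∈ [c,d] the partial mapping f_y : [a,b] → ℝ, f_y(u) = f(u,y), is a Godunova–Levin function. -/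
/-- Every Godunova–Levin function on the rectangle `Δ = [a,b] × [c,d]`
(nonnegative, with `f(λx+(1-λ)z, λy+(1-λ)w) ≤ f(x,y)/λ + f(z,w)/(1-λ)` for
`λ ∈ (0,1)`) is a co-ordinated Godunova–Levin function: each partial mapping
`v ↦ f(x,v)` and `u ↦ f(u,y)` is a Godunova–Levin function. -/
theorem godunova_levin_imp_coordinated
    (a b c d : ℝ) (hab : a < b) (hcd : c < d) (f : ℝ × ℝ → ℝ)
    (hf0 : ∀ p ∈ Set.Icc a b ×ˢ Set.Icc c d, 0 ≤ f p)
    (hfQ : ∀ x ∈ Set.Icc a b, ∀ y ∈ Set.Icc c d, ∀ z ∈ Set.Icc a b,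
      ∀ w ∈ Set.Icc c d, ∀ l : ℝ, 0 < l → l < 1 →
      f (l * x + (1 - l) * z, l * y + (1 - l) * w) ≤
        f (x, y) / l + f (z, w) / (1 - l)) :
    (∀ x ∈ Set.Icc a b,
      (∀ v ∈ Set.Icc c d, 0 ≤ f (x, v)) ∧
      (∀ v₁ ∈ Set.Icc c d, ∀ v₂ ∈ Set.Icc c d, ∀ l : ℝ, 0 < l → l < 1 →
        f (x, l * v₁ + (1 - l) * v₂) ≤ f (x, v₁) / l + f (x, v₂) / (1 - l))) ∧
    (∀ y ∈ Set.Icc c d,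
      (∀ u ∈ Set.Icc a b, 0 ≤ f (u, y)) ∧
      (∀ u₁ ∈ Set.Icc a b, ∀ u₂ ∈ Set.Icc a b, ∀ l : ℝ, 0 < l → l < 1 →
        f (l * u₁ + (1 - l) * u₂, y) ≤ f (u₁, y) / l + f (u₂, y) / (1 - l))) := by
  constructor
  · intro x hx
    refine ⟨fun v hv => hf0 (x, v) ⟨hx, hv⟩, ?_⟩
    intro v₁ hv₁ v₂ hv₂ l hl hl1
    have := hfQ x hx v₁ hv₁ x hx v₂ hv₂ l hl hl1
    have hx' : l * x + (1 - l) * x = x := by ring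
    rwa [hx'] at this
  · intro y hy
    refine ⟨fun u hu => hf0 (u, y) ⟨hu, hy⟩, ?_⟩
    intro u₁ hu₁ u₂ hu₂ l hl hl1
    have := hfQ u₁ hu₁ y hy u₂ hu₂ y hy l hl hl1
    have hy' : l * y + (1 - l) * y = y := by ring
    rwa [hy'] at this
end

section
/- Suppose f : Δ = [a,b] × [c,d] → ℝ (a < b, c < d) is a co-ordinated Godunova–Levin function on Δ, with f_x ∈ L₁[c,d] and f_y ∈ L₁[a,b]. Then (1/16) f((a+b)/2, (c+d)/2) ≤ (1/8)[(1/(b-a)) ∫_a^b f(x, (c+d)/2) dx + (1/(d-c)) ∫_c^d f((a+b)/2, y) dy] ≤ (1/((b-a)(d-c))) ∫_a^b ∫_c^d f(x,y) dy dx. -/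
open MeasureTheory intervalIntegral

private lemma mid_integral_bound (a b : ℝ) (hab : a < b) (h : ℝ → ℝ) (m : ℝ)
    (hm : ∀ x ∈ Set.Icc a b, m ≤ 2 * h x + 2 * h (a + b - x))
    (hint : IntervalIntegrable h volume a b) :
    (b - a) * m ≤ 4 * ∫ x in a..b, h x := by
  have hrefl : IntervalIntegrable (fun x => h (a + b - x)) volume a b := by
    simpa using (hint.comp_sub_left (a + b)).symm
  have hmono := intervalIntegral.integral_mono_on hab.le
    (_root_.intervalIntegrable_const (c := m)) ((hint.const_mul 2).add (hrefl.const_mul 2))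
    (fun x hx => hm x hx)
  rw [intervalIntegral.integral_const,
      intervalIntegral.integral_add (hint.const_mul 2) (hrefl.const_mul 2),
      intervalIntegral.integral_const_mul, intervalIntegral.integral_const_mul] at hmono
  have hre : (∫ x in a..b, h (a + b - x)) = ∫ x in a..b, h x := by
    rw [intervalIntegral.integral_comp_sub_left h (a + b)]
    norm_num
  rw [hre] at hmono
  simp only [smul_eq_mul] at hmono
  linarith

/-- Hadamard-type inequalities for co-ordinated Godunova–Levin functions on
`Δ = [a,b] × [c,d]`, with the partial mappings `f_x ∈ L₁[c,d]`,
`f_y ∈ L₁[a,b]` (and the double integral assumed to exist). -/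
theorem coordinated_godunova_levin_hadamard
    (a b c d : ℝ) (hab : a < b) (hcd : c < d) (f : ℝ × ℝ → ℝ)
    (hf0 : ∀ p ∈ Set.Icc a b ×ˢ Set.Icc c d, 0 ≤ f p)
    (hfx : ∀ x ∈ Set.Icc a b, ∀ v₁ ∈ Set.Icc c d, ∀ v₂ ∈ Set.Icc c d,
      ∀ l : ℝ, 0 < l → l < 1 →
      f (x, l * v₁ + (1 - l) * v₂) ≤ f (x, v₁) / l + f (x, v₂) / (1 - l))
    (hfy : ∀ y ∈ Set.Icc c d, ∀ u₁ ∈ Set.Icc a b, ∀ u₂ ∈ Set.Icc a b,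
      ∀ l : ℝ, 0 < l → l < 1 →
      f (l * u₁ + (1 - l) * u₂, y) ≤ f (u₁, y) / l + f (u₂, y) / (1 - l))
    (hix : ∀ x ∈ Set.Icc a b, IntervalIntegrable (fun v => f (x, v)) volume c d)
    (hiy : ∀ y ∈ Set.Icc c d, IntervalIntegrable (fun u => f (u, y)) volume a b)
    (hiI : IntervalIntegrable (fun x => ∫ y in c..d, f (x, y)) volume a b) :
    (1 / 16) * f ((a + b) / 2, (c + d) / 2) ≤
      (1 / 8) * ((1 / (b - a)) * (∫ x in a..b, f (x, (c + d) / 2)) +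
        (1 / (d - c)) * ∫ y in c..d, f ((a + b) / 2, y)) ∧
    (1 / 8) * ((1 / (b - a)) * (∫ x in a..b, f (x, (c + d) / 2)) +
        (1 / (d - c)) * ∫ y in c..d, f ((a + b) / 2, y)) ≤
      (1 / ((b - a) * (d - c))) * ∫ x in a..b, ∫ y in c..d, f (x, y) := by
  have hba : (0:ℝ) < b - a := by linarith
  have hdc : (0:ℝ) < d - c := by linarith
  set mx := (a + b) / 2 with hmx
  set my := (c + d) / 2 with hmy
  have hmxm : mx ∈ Set.Icc a b := by constructor <;> simp [hmx] <;> linarith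
  have hmym : my ∈ Set.Icc c d := by constructor <;> simp [hmy] <;> linarith
  set A := ∫ x in a..b, f (x, my) with hA
  set B := ∫ y in c..d, f (mx, y) with hB
  set I := ∫ x in a..b, ∫ y in c..d, f (x, y) with hI
  -- midpoint pointwise bounds
  have keyx : ∀ x ∈ Set.Icc a b, ∀ y ∈ Set.Icc c d,
      f (x, my) ≤ 2 * f (x, y) + 2 * f (x, c + d - y) := by
    intro x hx y hy
    have hy' : c + d - y ∈ Set.Icc c d := by
      constructor <;> [linarith [hy.2]; linarith [hy.1]]
    have := hfx x hx y hy (c + d - y) hy' (1/2) (by norm_num) (by norm_num)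
    have e : (1:ℝ)/2 * y + (1 - 1/2) * (c + d - y) = my := by rw [hmy]; ring
    rw [e] at this
    have e2 : f (x, y) / (1/2 : ℝ) = 2 * f (x, y) := by ring
    have e3 : f (x, (c + d - y)) / (1 - 1/2 : ℝ) = 2 * f (x, c + d - y) := by ring
    linarith [this, e2 ▸ le_refl (f (x, y) / (1/2:ℝ))]
  have keyy : ∀ y ∈ Set.Icc c d, ∀ x ∈ Set.Icc a b,
      f (mx, y) ≤ 2 * f (x, y) + 2 * f (a + b - x, y) := by
    intro y hy x hx
    have hx' : a + b - x ∈ Set.Icc a b := by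
      constructor <;> [linarith [hx.2]; linarith [hx.1]]
    have := hfy y hy x hx (a + b - x) hx' (1/2) (by norm_num) (by norm_num)
    have e : (1:ℝ)/2 * x + (1 - 1/2) * (a + b - x) = mx := by rw [hmx]; ring
    rw [e] at this
    have e2 : f (x, y) / (1/2 : ℝ) = 2 * f (x, y) := by ring
    have e3 : f ((a + b - x), y) / (1 - 1/2 : ℝ) = 2 * f (a + b - x, y) := by ring
    linarith [this]
  -- 1D midpoint bounds
  have h1 : (d - c) * f (mx, my) ≤ 4 * B := by
    refine mid_integral_bound c d hcd (fun v => f (mx, v)) _ ?_ (hix mx hmxm)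
    intro y hy; exact keyx mx hmxm y hy
  have h2 : (b - a) * f (mx, my) ≤ 4 * A := by
    refine mid_integral_bound a b hab (fun u => f (u, my)) _ ?_ (hiy my hmym)
    intro x hx; exact keyy my hmym x hx
  -- second stage: A against I
  have h3 : (d - c) * A ≤ 4 * I := by
    have hptw : ∀ x ∈ Set.Icc a b,
        (d - c) * f (x, my) ≤ 4 * ∫ y in c..d, f (x, y) := by
      intro x hx
      refine mid_integral_bound c d hcd (fun v => f (x, v)) _ ?_ (hix x hx)
      intro y hy; exact keyx x hx y hy
    have hmono := intervalIntegral.integral_mono_on hab.le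
      ((hiy my hmym).const_mul (d - c)) (hiI.const_mul 4) hptw
    rw [intervalIntegral.integral_const_mul, intervalIntegral.integral_const_mul] at hmono
    exact hmono
  -- B against I
  have h4 : (b - a) * B ≤ 4 * I := by
    have hptw : ∀ x ∈ Set.Icc a b,
        B ≤ 2 * (∫ y in c..d, f (x, y)) + 2 * (∫ y in c..d, f (a + b - x, y)) := by
      intro x hx
      have hx' : a + b - x ∈ Set.Icc a b := by
        constructor <;> [linarith [hx.2]; linarith [hx.1]]
      have hmono := intervalIntegral.integral_mono_on hcd.le (hix mx hmxm)
        (((hix x hx).const_mul 2).add ((hix (a + b - x) hx').const_mul 2))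
        (fun y hy => keyy y hy x hx)
      rw [intervalIntegral.integral_add ((hix x hx).const_mul 2)
          ((hix (a + b - x) hx').const_mul 2),
        intervalIntegral.integral_const_mul, intervalIntegral.integral_const_mul] at hmono
      exact hmono
    exact mid_integral_bound a b hab (fun x => ∫ y in c..d, f (x, y)) B hptw hiI
  constructor
  · have hX : f (mx, my) / 4 ≤ (1 / (b - a)) * A := by
      rw [one_div, inv_mul_eq_div, div_le_div_iff₀ (by norm_num) hba]
      nlinarith
    have hY : f (mx, my) / 4 ≤ (1 / (d - c)) * B := by
      rw [one_div, inv_mul_eq_div, div_le_div_iff₀ (by norm_num) hdc]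
      nlinarith
    linarith
  · have hD : (0:ℝ) < (b - a) * (d - c) := mul_pos hba hdc
    have hX : (1 / (b - a)) * A ≤ 4 * ((1 / ((b - a) * (d - c))) * I) := by
      rw [one_div, inv_mul_eq_div, one_div, mul_comm (4:ℝ), mul_assoc, inv_mul_eq_div,
        div_le_div_iff₀ hba hD]
      nlinarith
    have hY : (1 / (d - c)) * B ≤ 4 * ((1 / ((b - a) * (d - c))) * I) := by
      rw [one_div, inv_mul_eq_div, one_div, mul_comm (4:ℝ), mul_assoc, inv_mul_eq_div,
        div_le_div_iff₀ hdc hD]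
      nlinarith
    linarith
end

section
/- Suppose f : Δ = [a,b] × [a,b] → ℝ (a < b) is a co-ordinated Godunova–Levin function on Δ, with the partial mappings integrable on [a,b]. Then (1/16) f((a+b)/2, (a+b)/2) ≤ (1/8)[(1/(b-a)) ∫_a^b {f(x, (a+b)/2) + f((a+b)/2, x)} dx] ≤ (1/(b-a)²) ∫_a^b ∫_a^b f(x,y) dy dx. -/
open MeasureTheory intervalIntegral

/-- Reflection of an interval integrable function is interval integrable, with
the same integral. -/
lemma gl_refl_int (g : ℝ → ℝ) (a b : ℝ) (hg : IntervalIntegrable g volume a b) :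
    IntervalIntegrable (fun x => g (a + b - x)) volume a b ∧
      (∫ x in a..b, g (a + b - x)) = ∫ x in a..b, g x := by
  constructor
  · have := (hg.symm.comp_sub_left (a + b))
    simpa using this
  · have := intervalIntegral.integral_comp_sub_left (a := a) (b := b) g (a + b)
    simpa using this

/-- Key midpoint step: if `c ≤ 2 g x + 2 g (a+b-x)` on `[a,b]`, then
`(b-a) * c ≤ 4 ∫ g`. -/
lemma gl_mid (a b : ℝ) (hab : a < b) (g : ℝ → ℝ) (c : ℝ)
    (hg : IntervalIntegrable g volume a b)
    (hpt : ∀ x ∈ Set.Icc a b, c ≤ 2 * g x + 2 * g (a + b - x)) :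
    (b - a) * c ≤ 4 * ∫ x in a..b, g x := by
  obtain ⟨hgr, hge⟩ := gl_refl_int g a b hg
  have h1 : IntervalIntegrable (fun x => 2 * g x + 2 * g (a + b - x)) volume a b :=
    (hg.const_mul 2).add (hgr.const_mul 2)
  have h2 : (∫ x in a..b, (c : ℝ)) ≤ ∫ x in a..b, (2 * g x + 2 * g (a + b - x)) :=
    intervalIntegral.integral_mono_on hab.le intervalIntegrable_const h1 hpt
  rw [intervalIntegral.integral_const, smul_eq_mul,
    intervalIntegral.integral_add (hg.const_mul 2) (hgr.const_mul 2),
    intervalIntegral.integral_const_mul, intervalIntegral.integral_const_mul, hge] at h2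
  linarith

/-- Hadamard-type inequalities for a co-ordinated Godunova–Levin function on
the square `Δ = [a,b] × [a,b]`, with the partial mappings integrable on
`[a,b]` (and the double integral assumed to exist). -/
theorem coordinated_godunova_levin_hadamard_square
    (a b : ℝ) (hab : a < b) (f : ℝ × ℝ → ℝ)
    (hf0 : ∀ p ∈ Set.Icc a b ×ˢ Set.Icc a b, 0 ≤ f p)
    (hfx : ∀ x ∈ Set.Icc a b, ∀ v₁ ∈ Set.Icc a b, ∀ v₂ ∈ Set.Icc a b,
      ∀ l : ℝ, 0 < l → l < 1 →
      f (x, l * v₁ + (1 - l) * v₂) ≤ f (x, v₁) / l + f (x, v₂) / (1 - l))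
    (hfy : ∀ y ∈ Set.Icc a b, ∀ u₁ ∈ Set.Icc a b, ∀ u₂ ∈ Set.Icc a b,
      ∀ l : ℝ, 0 < l → l < 1 →
      f (l * u₁ + (1 - l) * u₂, y) ≤ f (u₁, y) / l + f (u₂, y) / (1 - l))
    (hix : ∀ x ∈ Set.Icc a b, IntervalIntegrable (fun v => f (x, v)) volume a b)
    (hiy : ∀ y ∈ Set.Icc a b, IntervalIntegrable (fun u => f (u, y)) volume a b)
    (hiI : IntervalIntegrable (fun x => ∫ y in a..b, f (x, y)) volume a b) :
    (1 / 16) * f ((a + b) / 2, (a + b) / 2) ≤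
      (1 / 8) * ((1 / (b - a)) *
        ∫ x in a..b, (f (x, (a + b) / 2) + f ((a + b) / 2, x))) ∧
    (1 / 8) * ((1 / (b - a)) *
        ∫ x in a..b, (f (x, (a + b) / 2) + f ((a + b) / 2, x))) ≤
      (1 / (b - a) ^ 2) * ∫ x in a..b, ∫ y in a..b, f (x, y) := by
  set m : ℝ := (a + b) / 2 with hm
  have hba : (0:ℝ) < b - a := by linarith
  have hmmem : m ∈ Set.Icc a b := by constructor <;> [skip; skip] <;> simp [hm] <;> linarith
  have hrefl : ∀ x ∈ Set.Icc a b, a + b - x ∈ Set.Icc a b := by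
    intro x hx
    exact ⟨by linarith [hx.2], by linarith [hx.1]⟩
  have hhalf : ∀ x : ℝ, (1/2 : ℝ) * x + (1 - 1/2) * (a + b - x) = m := by
    intro x; rw [hm]; ring
  have hdiv : ∀ t : ℝ, t / (1/2 : ℝ) = 2 * t := by intro t; ring
  -- (1): (b-a) * f(m,m) ≤ 4 ∫ f(x,m) dx
  have h1 : (b - a) * f (m, m) ≤ 4 * ∫ x in a..b, f (x, m) := by
    apply gl_mid a b hab _ _ (hiy m hmmem)
    intro x hx
    have h := hfy m hmmem x hx (a + b - x) (hrefl x hx) (1/2) (by norm_num) (by norm_num)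
    rw [hhalf x, hdiv, show (1 - 1/2 : ℝ) = 1/2 by norm_num, hdiv] at h
    linarith
  -- (2): (b-a) * f(m,m) ≤ 4 ∫ f(m,x) dx
  have h2 : (b - a) * f (m, m) ≤ 4 * ∫ x in a..b, f (m, x) := by
    apply gl_mid a b hab _ _ (hix m hmmem)
    intro x hx
    have h := hfx m hmmem x hx (a + b - x) (hrefl x hx) (1/2) (by norm_num) (by norm_num)
    rw [hhalf x, hdiv, show (1 - 1/2 : ℝ) = 1/2 by norm_num, hdiv] at h
    linarith
  set F : ℝ → ℝ := fun x => ∫ y in a..b, f (x, y) with hF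
  -- (3): (b-a) * ∫ f(x,m) dx ≤ 4 ∫ F
  have h3 : (b - a) * ∫ x in a..b, f (x, m) ≤ 4 * ∫ x in a..b, F x := by
    have hpt : ∀ x ∈ Set.Icc a b, (b - a) * f (x, m) ≤ 4 * F x := by
      intro x hx
      apply gl_mid a b hab _ _ (hix x hx)
      intro y hy
      have h := hfx x hx y hy (a + b - y) (hrefl y hy) (1/2) (by norm_num) (by norm_num)
      rw [hhalf y, hdiv, show (1 - 1/2 : ℝ) = 1/2 by norm_num, hdiv] at h
      linarith
    have := intervalIntegral.integral_mono_on hab.le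
      ((hiy m hmmem).const_mul (b - a)) (hiI.const_mul 4) hpt
    rwa [intervalIntegral.integral_const_mul, intervalIntegral.integral_const_mul] at this
  -- (4): (b-a) * ∫ f(m,x) dx ≤ 4 ∫ F
  have h4 : (b - a) * ∫ x in a..b, f (m, x) ≤ 4 * ∫ x in a..b, F x := by
    apply gl_mid a b hab F _ hiI
    intro x hx
    have hpt : ∀ y ∈ Set.Icc a b, f (m, y) ≤ 2 * f (x, y) + 2 * f (a + b - x, y) := by
      intro y hy
      have h := hfy y hy x hx (a + b - x) (hrefl x hx) (1/2) (by norm_num) (by norm_num)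
      rw [hhalf x, hdiv, show (1 - 1/2 : ℝ) = 1/2 by norm_num, hdiv] at h
      linarith
    have hint : IntervalIntegrable
        (fun y => 2 * f (x, y) + 2 * f (a + b - x, y)) volume a b :=
      ((hix x hx).const_mul 2).add ((hix (a + b - x) (hrefl x hx)).const_mul 2)
    have := intervalIntegral.integral_mono_on hab.le (hix m hmmem) hint hpt
    rw [intervalIntegral.integral_add ((hix x hx).const_mul 2)
        ((hix (a + b - x) (hrefl x hx)).const_mul 2),
      intervalIntegral.integral_const_mul, intervalIntegral.integral_const_mul] at this
    simp only [hF]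
    linarith
  set I1 : ℝ := ∫ x in a..b, f (x, m) with hI1
  set I2 : ℝ := ∫ x in a..b, f (m, x) with hI2
  set D : ℝ := ∫ x in a..b, F x with hD
  have hsum : (∫ x in a..b, (f (x, m) + f (m, x))) = I1 + I2 :=
    intervalIntegral.integral_add (hiy m hmmem) (hix m hmmem)
  constructor
  · rw [hsum]
    have e1 : (1 / 8 : ℝ) * ((1 / (b - a)) * (I1 + I2)) = (I1 + I2) / (8 * (b - a)) := by
      field_simp
    rw [e1, le_div_iff₀ (by linarith : (0:ℝ) < 8 * (b - a))]
    nlinarith [h1, h2]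
  · rw [hsum]
    have e1 : (1 / 8 : ℝ) * ((1 / (b - a)) * (I1 + I2)) = (I1 + I2) / (8 * (b - a)) := by
      field_simp
    have e2 : (1 / (b - a) ^ 2 : ℝ) * D = D / (b - a) ^ 2 := by ring
    rw [e1, e2, div_le_div_iff₀ (by linarith : (0:ℝ) < 8 * (b - a)) (by positivity)]
    have hS : (b - a) * (I1 + I2) ≤ 8 * D := by linarith
    nlinarith [mul_le_mul_of_nonneg_left hS hba.le]
end

section
/- Suppose f : Δ = [a,b] × [c,d] → ℝ (a < b, c < d) is a co-ordinated P-function on Δ, with f_x ∈ L₁[c,d] and f_y ∈ L₁[a,b]. Then f((a+b)/2, (c+d)/2) ≤ (1/(b-a)) ∫_a^b f(x, (c+d)/2) dx + (1/(d-c)) ∫_c^d f((a+b)/2, y) dy ≤ (4/((b-a)(d-c))) ∫_a^b ∫_c^d f(x,y) dy dx ≤ (2/(b-a))[∫_a^b f(x,c) dx + ∫_a^b f(x,d) dx] + (2/(d-c))[∫_c^d f(a,y) dy + ∫_c^d f(b,y) dy]. -/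
open MeasureTheory intervalIntegral

/-- If `K ≤ g x + g (a+b-x)` on `[a,b]`, then `K ≤ (2/(b-a)) ∫ g`. -/
lemma const_le_twice_avg (a b : ℝ) (hab : a < b) (K : ℝ) (g : ℝ → ℝ)
    (h : ∀ x ∈ Set.Icc a b, K ≤ g x + g (a + b - x))
    (hgi : IntervalIntegrable g volume a b) :
    K ≤ (2 / (b - a)) * ∫ x in a..b, g x := by
  have hba : (0:ℝ) < b - a := by linarith
  have hrefl : IntervalIntegrable (fun x => g (a + b - x)) volume a b := by
    have := hgi.comp_sub_left (a + b)
    simpa using this.symm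
  have h1 : (∫ _x in a..b, K) ≤ ∫ x in a..b, (g x + g (a + b - x)) := by
    apply intervalIntegral.integral_mono_on hab.le (intervalIntegrable_const)
      (hgi.add hrefl) h
  have h2 : (∫ x in a..b, (g x + g (a + b - x)))
      = (∫ x in a..b, g x) + ∫ x in a..b, g (a + b - x) :=
    intervalIntegral.integral_add hgi hrefl
  have h3 : (∫ x in a..b, g (a + b - x)) = ∫ x in a..b, g x := by
    rw [intervalIntegral.integral_comp_sub_left g (a + b)]
    norm_num
  have h4 : (∫ _x in a..b, K) = (b - a) * K := by simp [mul_comm]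
  rw [h2, h3, h4] at h1
  rw [div_mul_eq_mul_div, le_div_iff₀ hba]
  linarith [h1]

/-- If `g x ≤ C` on `[a,b]`, then `∫ g ≤ (b-a) * C`. -/
lemma integral_le_const_mul (a b : ℝ) (hab : a ≤ b) (C : ℝ) (g : ℝ → ℝ)
    (h : ∀ x ∈ Set.Icc a b, g x ≤ C)
    (hgi : IntervalIntegrable g volume a b) :
    (∫ x in a..b, g x) ≤ (b - a) * C := by
  have := intervalIntegral.integral_mono_on hab hgi intervalIntegrable_const h
  simpa [smul_eq_mul] using this

/-- Hadamard-type inequalities for co-ordinated P-functions on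
`Δ = [a,b] × [c,d]`, with the partial mappings `f_x ∈ L₁[c,d]`,
`f_y ∈ L₁[a,b]` (and the double integral assumed to exist). -/
theorem coordinated_p_function_hadamard
    (a b c d : ℝ) (hab : a < b) (hcd : c < d) (f : ℝ × ℝ → ℝ)
    (hf0 : ∀ p ∈ Set.Icc a b ×ˢ Set.Icc c d, 0 ≤ f p)
    (hfx : ∀ x ∈ Set.Icc a b, ∀ v₁ ∈ Set.Icc c d, ∀ v₂ ∈ Set.Icc c d,
      ∀ l ∈ Set.Icc (0:ℝ) 1,
      f (x, l * v₁ + (1 - l) * v₂) ≤ f (x, v₁) + f (x, v₂))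
    (hfy : ∀ y ∈ Set.Icc c d, ∀ u₁ ∈ Set.Icc a b, ∀ u₂ ∈ Set.Icc a b,
      ∀ l ∈ Set.Icc (0:ℝ) 1,
      f (l * u₁ + (1 - l) * u₂, y) ≤ f (u₁, y) + f (u₂, y))
    (hix : ∀ x ∈ Set.Icc a b, IntervalIntegrable (fun v => f (x, v)) volume c d)
    (hiy : ∀ y ∈ Set.Icc c d, IntervalIntegrable (fun u => f (u, y)) volume a b)
    (hiI : IntervalIntegrable (fun x => ∫ y in c..d, f (x, y)) volume a b) :
    f ((a + b) / 2, (c + d) / 2) ≤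
      (1 / (b - a)) * (∫ x in a..b, f (x, (c + d) / 2)) +
        (1 / (d - c)) * ∫ y in c..d, f ((a + b) / 2, y) ∧
    (1 / (b - a)) * (∫ x in a..b, f (x, (c + d) / 2)) +
        (1 / (d - c)) * (∫ y in c..d, f ((a + b) / 2, y)) ≤
      (4 / ((b - a) * (d - c))) * ∫ x in a..b, ∫ y in c..d, f (x, y) ∧
    (4 / ((b - a) * (d - c))) * (∫ x in a..b, ∫ y in c..d, f (x, y)) ≤
      (2 / (b - a)) * ((∫ x in a..b, f (x, c)) + ∫ x in a..b, f (x, d)) +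
      (2 / (d - c)) * ((∫ y in c..d, f (a, y)) + ∫ y in c..d, f (b, y)) := by
  have hba : (0:ℝ) < b - a := by linarith
  have hdc : (0:ℝ) < d - c := by linarith
  set m := (a + b) / 2 with hm
  set n := (c + d) / 2 with hn
  have hmI : m ∈ Set.Icc a b := ⟨by rw [hm]; linarith, by rw [hm]; linarith⟩
  have hnI : n ∈ Set.Icc c d := ⟨by rw [hn]; linarith, by rw [hn]; linarith⟩
  have half : (1/2 : ℝ) ∈ Set.Icc (0:ℝ) 1 := by norm_num
  -- reflections stay in intervals
  have hreflx : ∀ x ∈ Set.Icc a b, a + b - x ∈ Set.Icc a b := by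
    intro x hx; exact ⟨by linarith [hx.2], by linarith [hx.1]⟩
  have hrefly : ∀ y ∈ Set.Icc c d, c + d - y ∈ Set.Icc c d := by
    intro y hy; exact ⟨by linarith [hy.2], by linarith [hy.1]⟩
  -- pointwise midpoint inequality in x
  have pmx : ∀ y ∈ Set.Icc c d, ∀ x ∈ Set.Icc a b,
      f (m, y) ≤ f (x, y) + f (a + b - x, y) := by
    intro y hy x hx
    have := hfy y hy x hx (a + b - x) (hreflx x hx) (1/2) half
    have e : (1/2 : ℝ) * x + (1 - 1/2) * (a + b - x) = m := by rw [hm]; ring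
    rwa [e] at this
  -- pointwise midpoint inequality in y
  have pmy : ∀ x ∈ Set.Icc a b, ∀ y ∈ Set.Icc c d,
      f (x, n) ≤ f (x, y) + f (x, c + d - y) := by
    intro x hx y hy
    have := hfx x hx y hy (c + d - y) (hrefly y hy) (1/2) half
    have e : (1/2 : ℝ) * y + (1 - 1/2) * (c + d - y) = n := by rw [hn]; ring
    rwa [e] at this
  -- pointwise endpoint inequality in y : f(x,y) ≤ f(x,c) + f(x,d)
  have pex : ∀ x ∈ Set.Icc a b, ∀ y ∈ Set.Icc c d,
      f (x, y) ≤ f (x, c) + f (x, d) := by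
    intro x hx y hy
    have hl : (d - y) / (d - c) ∈ Set.Icc (0:ℝ) 1 := by
      constructor
      · exact div_nonneg (by linarith [hy.2]) hdc.le
      · rw [div_le_one hdc]; linarith [hy.1]
    have := hfx x hx c ⟨le_refl c, hcd.le⟩ d ⟨hcd.le, le_refl d⟩ _ hl
    have e : (d - y) / (d - c) * c + (1 - (d - y) / (d - c)) * d = y := by
      field_simp; ring
    rwa [e] at this
  -- pointwise endpoint inequality in x : f(x,y) ≤ f(a,y) + f(b,y)
  have pey : ∀ y ∈ Set.Icc c d, ∀ x ∈ Set.Icc a b,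
      f (x, y) ≤ f (a, y) + f (b, y) := by
    intro y hy x hx
    have hl : (b - x) / (b - a) ∈ Set.Icc (0:ℝ) 1 := by
      constructor
      · exact div_nonneg (by linarith [hx.2]) hba.le
      · rw [div_le_one hba]; linarith [hx.1]
    have := hfy y hy a ⟨le_refl a, hab.le⟩ b ⟨hab.le, le_refl b⟩ _ hl
    have e : (b - x) / (b - a) * a + (1 - (b - x) / (b - a)) * b = x := by
      field_simp; ring
    rwa [e] at this
  -- FIRST INEQUALITY
  have A1 : f (m, n) ≤ (2 / (b - a)) * ∫ x in a..b, f (x, n) := by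
    apply const_le_twice_avg a b hab _ (fun x => f (x, n))
      (fun x hx => pmx n hnI x hx) (hiy n hnI)
  have A2 : f (m, n) ≤ (2 / (d - c)) * ∫ y in c..d, f (m, y) := by
    apply const_le_twice_avg c d hcd _ (fun y => f (m, y))
      (fun y hy => pmy m hmI y hy) (hix m hmI)
  have first : f (m, n) ≤
      (1 / (b - a)) * (∫ x in a..b, f (x, n)) +
        (1 / (d - c)) * ∫ y in c..d, f (m, y) := by
    have h := add_le_add A1 A2
    have e1 : (2 / (b - a)) * (∫ x in a..b, f (x, n)) =
        2 * ((1 / (b - a)) * ∫ x in a..b, f (x, n)) := by ring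
    have e2 : (2 / (d - c)) * (∫ y in c..d, f (m, y)) =
        2 * ((1 / (d - c)) * ∫ y in c..d, f (m, y)) := by ring
    rw [e1, e2] at h
    linarith [h]
  -- SECOND INEQUALITY
  -- per-x bound : f (x, n) ≤ 2/(d-c) * ∫ f(x,y) dy
  have B1 : ∀ x ∈ Set.Icc a b,
      f (x, n) ≤ (2 / (d - c)) * ∫ y in c..d, f (x, y) :=
    fun x hx => const_le_twice_avg c d hcd _ (fun y => f (x, y))
      (fun y hy => pmy x hx y hy) (hix x hx)
  have B1' : (∫ x in a..b, f (x, n)) ≤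
      (2 / (d - c)) * ∫ x in a..b, ∫ y in c..d, f (x, y) := by
    rw [← intervalIntegral.integral_const_mul]
    exact intervalIntegral.integral_mono_on hab.le (hiy n hnI)
      (hiI.const_mul _) B1
  -- per-x bound : ∫ f(m,y) dy ≤ (∫f(x,y)dy) + (∫f(a+b-x,y)dy)
  have B2 : (∫ y in c..d, f (m, y)) ≤
      (2 / (b - a)) * ∫ x in a..b, ∫ y in c..d, f (x, y) := by
    apply const_le_twice_avg a b hab _ (fun x => ∫ y in c..d, f (x, y)) _ hiI
    intro x hx
    have : (∫ y in c..d, f (m, y)) ≤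
        ∫ y in c..d, (f (x, y) + f (a + b - x, y)) := by
      apply intervalIntegral.integral_mono_on hcd.le (hix m hmI)
        ((hix x hx).add (hix _ (hreflx x hx)))
      intro y hy
      exact pmx y hy x hx
    rw [intervalIntegral.integral_add (hix x hx) (hix _ (hreflx x hx))] at this
    exact this
  have second : (1 / (b - a)) * (∫ x in a..b, f (x, n)) +
      (1 / (d - c)) * (∫ y in c..d, f (m, y)) ≤
      (4 / ((b - a) * (d - c))) * ∫ x in a..b, ∫ y in c..d, f (x, y) := by
    have t1 : (1 / (b - a)) * (∫ x in a..b, f (x, n)) ≤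
        (1 / (b - a)) * ((2 / (d - c)) * ∫ x in a..b, ∫ y in c..d, f (x, y)) :=
      mul_le_mul_of_nonneg_left B1' (by positivity)
    have t2 : (1 / (d - c)) * (∫ y in c..d, f (m, y)) ≤
        (1 / (d - c)) * ((2 / (b - a)) * ∫ x in a..b, ∫ y in c..d, f (x, y)) :=
      mul_le_mul_of_nonneg_left B2 (by positivity)
    have e : (1 / (b - a)) * ((2 / (d - c)) * ∫ x in a..b, ∫ y in c..d, f (x, y)) +
        (1 / (d - c)) * ((2 / (b - a)) * ∫ x in a..b, ∫ y in c..d, f (x, y)) =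
        (4 / ((b - a) * (d - c))) * ∫ x in a..b, ∫ y in c..d, f (x, y) := by
      field_simp; ring
    linarith [add_le_add t1 t2]
  -- THIRD INEQUALITY
  have C1 : (∫ x in a..b, ∫ y in c..d, f (x, y)) ≤
      (d - c) * ((∫ x in a..b, f (x, c)) + ∫ x in a..b, f (x, d)) := by
    have step : ∀ x ∈ Set.Icc a b,
        (∫ y in c..d, f (x, y)) ≤ (d - c) * (f (x, c) + f (x, d)) := by
      intro x hx
      exact integral_le_const_mul c d hcd.le _ _ (fun y hy => pex x hx y hy)
        (hix x hx)
    calc (∫ x in a..b, ∫ y in c..d, f (x, y))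
        ≤ ∫ x in a..b, (d - c) * (f (x, c) + f (x, d)) := by
          apply intervalIntegral.integral_mono_on hab.le hiI
            (((hiy c ⟨le_refl c, hcd.le⟩).add (hiy d ⟨hcd.le, le_refl d⟩)).const_mul _)
            step
      _ = (d - c) * ((∫ x in a..b, f (x, c)) + ∫ x in a..b, f (x, d)) := by
          rw [intervalIntegral.integral_const_mul,
            intervalIntegral.integral_add (hiy c ⟨le_refl c, hcd.le⟩)
              (hiy d ⟨hcd.le, le_refl d⟩)]
  have C2 : (∫ x in a..b, ∫ y in c..d, f (x, y)) ≤
      (b - a) * ((∫ y in c..d, f (a, y)) + ∫ y in c..d, f (b, y)) := by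
    apply integral_le_const_mul a b hab.le _ _ _ hiI
    intro x hx
    have : (∫ y in c..d, f (x, y)) ≤ ∫ y in c..d, (f (a, y) + f (b, y)) := by
      apply intervalIntegral.integral_mono_on hcd.le (hix x hx)
        ((hix a ⟨le_refl a, hab.le⟩).add (hix b ⟨hab.le, le_refl b⟩))
      intro y hy; exact pey y hy x hx
    rwa [intervalIntegral.integral_add (hix a ⟨le_refl a, hab.le⟩)
      (hix b ⟨hab.le, le_refl b⟩)] at this
  have third : (4 / ((b - a) * (d - c))) * (∫ x in a..b, ∫ y in c..d, f (x, y)) ≤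
      (2 / (b - a)) * ((∫ x in a..b, f (x, c)) + ∫ x in a..b, f (x, d)) +
      (2 / (d - c)) * ((∫ y in c..d, f (a, y)) + ∫ y in c..d, f (b, y)) := by
    have t1 : (2 / ((b - a) * (d - c))) * (∫ x in a..b, ∫ y in c..d, f (x, y)) ≤
        (2 / (b - a)) * ((∫ x in a..b, f (x, c)) + ∫ x in a..b, f (x, d)) := by
      have := mul_le_mul_of_nonneg_left C1
        (le_of_lt (by positivity : (0:ℝ) < 2 / ((b - a) * (d - c))))
      calc (2 / ((b - a) * (d - c))) * (∫ x in a..b, ∫ y in c..d, f (x, y))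
          ≤ (2 / ((b - a) * (d - c))) *
            ((d - c) * ((∫ x in a..b, f (x, c)) + ∫ x in a..b, f (x, d))) := this
        _ = (2 / (b - a)) * ((∫ x in a..b, f (x, c)) + ∫ x in a..b, f (x, d)) := by
            field_simp
    have t2 : (2 / ((b - a) * (d - c))) * (∫ x in a..b, ∫ y in c..d, f (x, y)) ≤
        (2 / (d - c)) * ((∫ y in c..d, f (a, y)) + ∫ y in c..d, f (b, y)) := by
      have := mul_le_mul_of_nonneg_left C2
        (le_of_lt (by positivity : (0:ℝ) < 2 / ((b - a) * (d - c))))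
      calc (2 / ((b - a) * (d - c))) * (∫ x in a..b, ∫ y in c..d, f (x, y))
          ≤ (2 / ((b - a) * (d - c))) *
            ((b - a) * ((∫ y in c..d, f (a, y)) + ∫ y in c..d, f (b, y))) := this
        _ = (2 / (d - c)) * ((∫ y in c..d, f (a, y)) + ∫ y in c..d, f (b, y)) := by
            field_simp
    have e : (4 / ((b - a) * (d - c))) * (∫ x in a..b, ∫ y in c..d, f (x, y)) =
        (2 / ((b - a) * (d - c))) * (∫ x in a..b, ∫ y in c..d, f (x, y)) +
        (2 / ((b - a) * (d - c))) * (∫ x in a..b, ∫ y in c..d, f (x, y)) := by ring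
    linarith [add_le_add t1 t2]
  exact ⟨first, second, third⟩
end
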